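/- arXiv:2005.06733 — 3 statements merged into one kernel-verified Lean document; each statement's English description precedes it below -/
import Mathlib

section
/- For every nonzero x ∈ ℝ³ (Rodrigues' formula), exp(hat(x)) = 1 + (sin ‖x‖ / ‖x‖) • hat(x) + ((1 − cos ‖x‖) / ‖x‖²) • hat(x)², where exp is the matrix exponential and ‖x‖ is the Euclidean norm. -/
open Matrix Real

/-- The hat map sending `x ∈ ℝ³` to the skew-symmetric matrix with `hat x *ᵥ y = x ×₃ y`. -/
def hat (x : Fin 3 → ℝ) : Matrix (Fin 3) (Fin 3) ℝ :=
  !![0, -x 2, x 1; x 2, 0, -x 0; -x 1, x 0, 0]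

/-- The Euclidean norm on ℝ³. -/
noncomputable def enorm3 (x : Fin 3 → ℝ) : ℝ := Real.sqrt (∑ i, x i ^ 2)

lemma enorm3_sq (x : Fin 3 → ℝ) : enorm3 x ^ 2 = x 0 ^ 2 + x 1 ^ 2 + x 2 ^ 2 := by
  rw [enorm3, Real.sq_sqrt (by positivity), Fin.sum_univ_three]

lemma enorm3_pos (x : Fin 3 → ℝ) (hx : x ≠ 0) : 0 < enorm3 x := by
  have h : ∃ i, x i ≠ 0 := by
    by_contra h
    push_neg at h
    exact hx (funext fun i => h i)
  obtain ⟨i, hi⟩ := h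
  apply Real.sqrt_pos.mpr
  have : (0:ℝ) < x i ^ 2 := by positivity
  calc (0:ℝ) < x i ^ 2 := this
    _ ≤ ∑ j, x j ^ 2 :=
      Finset.single_le_sum (f := fun j => x j ^ 2) (fun j _ => by positivity) (Finset.mem_univ i)

lemma hat_cube (x : Fin 3 → ℝ) : hat x ^ 3 = (-(enorm3 x ^ 2)) • hat x := by
  rw [enorm3_sq]
  ext i j
  fin_cases i <;> fin_cases j <;>
    simp [hat, pow_succ, Matrix.mul_apply, Fin.sum_univ_three, Matrix.smul_apply] <;> ring

lemma hat_pow_odd (x : Fin 3 → ℝ) (n : ℕ) :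
    hat x ^ (2 * n + 1) = ((-1 : ℝ) ^ n * enorm3 x ^ (2 * n)) • hat x := by
  induction n with
  | zero => simp
  | succ n ih =>
    have h1 : 2 * (n + 1) + 1 = (2 * n + 1) + 2 := by ring
    rw [h1, pow_add, ih, Matrix.smul_mul]
    rw [show hat x * hat x ^ 2 = hat x ^ 3 from by rw [← pow_succ']]
    rw [hat_cube, smul_smul]
    congr 1
    ring

set_option maxHeartbeats 1000000 in
/-- Rodrigues' formula: the matrix exponential of `hat x` for nonzero `x ∈ ℝ³`. -/
theorem rodrigues_formula (x : Fin 3 → ℝ) (hx : x ≠ 0) :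
    NormedSpace.exp (hat x) =
      1 + (Real.sin (enorm3 x) / enorm3 x) • hat x +
        ((1 - Real.cos (enorm3 x)) / (enorm3 x) ^ 2) • (hat x) ^ 2 := by
  set θ := enorm3 x with hθdef
  set A := hat x with hAdef
  have hθ : 0 < θ := enorm3_pos x hx
  have hθ0 : θ ≠ 0 := ne_of_gt hθ
  -- odd part
  have hsin := ((Real.hasSum_sin θ).div_const θ).smul_const A
  have hodd : HasSum (fun n : ℕ => (((Nat.factorial (2 * n + 1)) : ℝ))⁻¹ • A ^ (2 * n + 1))
      ((Real.sin θ / θ) • A) := by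
    convert hsin using 2 with n
    rw [hAdef, hat_pow_odd, smul_smul, ← hθdef]
    congr 1
    field_simp
    ring
  -- even part
  have hshift : HasSum (fun n : ℕ => (-1 : ℝ) ^ (n + 1) * θ ^ (2 * (n + 1)) / (Nat.factorial (2 * (n + 1))))
      (Real.cos θ - 1) :=
    (hasSum_nat_add_iff
      (f := fun n : ℕ => (-1 : ℝ) ^ n * θ ^ (2 * n) / (Nat.factorial (2 * n))) 1).mpr
      (by simpa using Real.hasSum_cos θ)
  have hcos1 : HasSum (fun n : ℕ => (-1 : ℝ) ^ n * θ ^ (2 * (n + 1)) / (Nat.factorial (2 * (n + 1))))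
      (1 - Real.cos θ) := by
    have := hshift.neg
    rw [neg_sub] at this
    convert this using 2 with n
    · rfl
    ring
  have hcos2 := ((hcos1.div_const (θ ^ 2)).smul_const (A ^ 2))
  have heven' : HasSum (fun n : ℕ => (((Nat.factorial (2 * (n + 1))) : ℝ))⁻¹ • A ^ (2 * (n + 1)))
      (((1 - Real.cos θ) / θ ^ 2) • A ^ 2) := by
    convert hcos2 using 2 with n
    have hp : A ^ (2 * (n + 1)) = ((-1 : ℝ) ^ n * θ ^ (2 * n)) • A ^ 2 := by
      rw [show 2 * (n + 1) = (2 * n + 1) + 1 from by ring, pow_succ, hAdef, hat_pow_odd,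
        Matrix.smul_mul, ← hθdef, ← pow_two]
    rw [hp, smul_smul]
    congr 1
    field_simp
    ring
  have heven : HasSum (fun n : ℕ => (((Nat.factorial (2 * n)) : ℝ))⁻¹ • A ^ (2 * n))
      (((1 - Real.cos θ) / θ ^ 2) • A ^ 2 + 1) := by
    have h := (hasSum_nat_add_iff (f := fun n : ℕ => (((Nat.factorial (2 * n)) : ℝ))⁻¹ • A ^ (2 * n)) 1).mp
      (by simpa using heven')

    simpa using h
  have total : HasSum (fun n : ℕ => (((Nat.factorial n : ℝ)))⁻¹ • A ^ n)
      ((((1 - Real.cos θ) / θ ^ 2) • A ^ 2 + 1) + (Real.sin θ / θ) • A) :=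
    HasSum.even_add_odd heven hodd
  simp only [NormedSpace.exp_eq_tsum ℝ]
  rw [total.tsum_eq]
  abel
end

section
/- Let R, R_d be real 3×3 matrices with RᵀR = 1, R_dᵀR_d = 1, det R = 1 and det R_d = 1. Then −1 ≤ tr(R_dᵀ · R) ≤ 3, so that ψ(R, R_d) = 2 − √(1 + tr(R_dᵀ · R)) is well defined and satisfies 0 ≤ ψ(R, R_d) ≤ 2; moreover ψ(R, R_d) = 0 if and only if R = R_d. -/
open Matrix

set_option maxHeartbeats 1000000 in
lemma so3_trace_aux (Q : Matrix (Fin 3) (Fin 3) ℝ)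
    (h2 : Q * Qᵀ = 1) (h3 : Q.det = 1) :
    (-1 ≤ Q.trace ∧ Q.trace ≤ 3) ∧ (Q.trace = 3 → Q = 1) := by
  have hadj : Q.adjugate = Qᵀ := by
    have hinv : Q⁻¹ = Qᵀ := Matrix.inv_eq_right_inv h2
    rw [← hinv, Matrix.inv_def, h3]; simp
  have a00 := congrFun (congrFun hadj 0) 0
  have a11 := congrFun (congrFun hadj 1) 1
  have a22 := congrFun (congrFun hadj 2) 2
  have r00 := congrFun (congrFun h2 0) 0
  have r11 := congrFun (congrFun h2 1) 1
  have r22 := congrFun (congrFun h2 2) 2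
  simp only [Matrix.adjugate_fin_three, Matrix.mul_apply, Fin.sum_univ_three, Matrix.one_apply,
    Matrix.transpose_apply, Matrix.cons_val', Matrix.cons_val_zero, Matrix.cons_val_one,
    Matrix.head_cons, Matrix.empty_val', Matrix.cons_val_fin_one, Matrix.head_fin_const,
    Matrix.cons_val_two, Matrix.tail_cons,
    Matrix.of_apply, if_true, if_false] at a00 a11 a22 r00 r11 r22
  clear hadj h2 h3
  have hlow : -1 ≤ Q 0 0 + Q 1 1 + Q 2 2 := by
    nlinarith [sq_nonneg (Q 2 1 - Q 1 2), sq_nonneg (Q 0 2 - Q 2 0), sq_nonneg (Q 1 0 - Q 0 1),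
      sq_nonneg (1 + Q 0 0 + Q 1 1 + Q 2 2), r00, r11, r22, a00, a11, a22]
  have h00 : Q 0 0 ≤ 1 := by nlinarith [sq_nonneg (Q 0 1), sq_nonneg (Q 0 2), sq_nonneg (Q 0 0 - 1)]
  have h11 : Q 1 1 ≤ 1 := by nlinarith [sq_nonneg (Q 1 0), sq_nonneg (Q 1 2), sq_nonneg (Q 1 1 - 1)]
  have h22 : Q 2 2 ≤ 1 := by nlinarith [sq_nonneg (Q 2 0), sq_nonneg (Q 2 1), sq_nonneg (Q 2 2 - 1)]
  rw [Matrix.trace_fin_three]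
  refine ⟨⟨hlow, by linarith⟩, fun ht => ?_⟩
  have e0 : Q 0 0 = 1 := by linarith
  have e1 : Q 1 1 = 1 := by linarith
  have e2 : Q 2 2 = 1 := by linarith
  clear hlow h00 h11 h22 ht a00 a11 a22
  ext i j
  fin_cases i <;> fin_cases j <;>
    simp only [Matrix.one_apply, Fin.reduceFinMk, Fin.reduceEq, if_false, if_true] <;>
    nlinarith [sq_nonneg (Q 0 1), sq_nonneg (Q 0 2), sq_nonneg (Q 1 0), sq_nonneg (Q 1 2),
      sq_nonneg (Q 2 0), sq_nonneg (Q 2 1)]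

/-- For rotation matrices `R, R_d ∈ SO(3)`, `-1 ≤ tr (R_dᵀ R) ≤ 3`, the attitude error
function `ψ(R, R_d) = 2 - √(1 + tr (R_dᵀ R))` satisfies `0 ≤ ψ ≤ 2`, and `ψ = 0 ↔ R = R_d`. -/
theorem attitude_error_function_bounds (R R_d : Matrix (Fin 3) (Fin 3) ℝ)
    (hR : Rᵀ * R = 1) (hRd : R_dᵀ * R_d = 1) (hdetR : R.det = 1) (hdetRd : R_d.det = 1) :
    (-1 ≤ (R_dᵀ * R).trace ∧ (R_dᵀ * R).trace ≤ 3) ∧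
      (0 ≤ 2 - Real.sqrt (1 + (R_dᵀ * R).trace) ∧
        2 - Real.sqrt (1 + (R_dᵀ * R).trace) ≤ 2) ∧
      (2 - Real.sqrt (1 + (R_dᵀ * R).trace) = 0 ↔ R = R_d) := by
  set Q := R_dᵀ * R with hQdef
  have hR' : R * Rᵀ = 1 := mul_eq_one_comm.mp hR
  have hRd' : R_d * R_dᵀ = 1 := mul_eq_one_comm.mp hRd
  have hQ2 : Q * Qᵀ = 1 := by
    rw [hQdef, Matrix.transpose_mul, Matrix.transpose_transpose,
      Matrix.mul_assoc, ← Matrix.mul_assoc R, hR', Matrix.one_mul, hRd]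
  have hQ3 : Q.det = 1 := by
    rw [hQdef, Matrix.det_mul, Matrix.det_transpose, hdetR, hdetRd, one_mul]
  obtain ⟨⟨hlo, hhi⟩, htr3⟩ := so3_trace_aux Q hQ2 hQ3
  have h1t : (0:ℝ) ≤ 1 + Q.trace := by linarith
  have h4 : 1 + Q.trace ≤ 4 := by linarith
  have hs4 : Real.sqrt 4 = 2 := by
    rw [show (4:ℝ) = 2 ^ 2 by norm_num, Real.sqrt_sq (by norm_num)]
  have hsle : Real.sqrt (1 + Q.trace) ≤ 2 := by
    calc Real.sqrt (1 + Q.trace) ≤ Real.sqrt 4 := Real.sqrt_le_sqrt h4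
    _ = 2 := hs4
  refine ⟨⟨hlo, hhi⟩, ⟨by linarith, by nlinarith [Real.sqrt_nonneg (1 + Q.trace)]⟩, ?_⟩
  constructor
  · intro h
    have hs : Real.sqrt (1 + Q.trace) = 2 := by linarith
    have : 1 + Q.trace = 4 := by
      have := Real.sq_sqrt h1t
      rw [hs] at this; linarith
    have hQ1 : Q = 1 := htr3 (by linarith)
    have : R_d * Q = R_d * 1 := by rw [hQ1]
    rw [hQdef, ← Matrix.mul_assoc, hRd', Matrix.one_mul, Matrix.mul_one] at this
    exact this
  · intro h
    subst h
    have : Q.trace = 3 := by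
      rw [hQdef, hRd, Matrix.trace_one]
      norm_num
    rw [this, show (1:ℝ) + 3 = 4 by norm_num, hs4]
    ring
end

section
/- Let R, R_d : ℝ → Matrix (Fin 3) (Fin 3) ℝ be differentiable curves taking values in SO(3), and Ω, Ω_d : ℝ → ℝ³ be continuous with R'(t) = R(t) · hat(Ω(t)) and R_d'(t) = R_d(t) · hat(Ω_d(t)) for all t. Suppose tr(R_d(t)ᵀ · R(t)) > −1 for all t. Then the function t ↦ ψ(t) = 2 − √(1 + tr(R_d(t)ᵀ · R(t))) is differentiable with ψ'(t) = ⟨e_R(t), e_Ω(t)⟩, where e_R(t) = (1/(2√(1 + tr(R_d(t)ᵀR(t))))) • vee(R_d(t)ᵀR(t) − R(t)ᵀR_d(t)) and e_Ω(t) = Ω(t) − R(t)ᵀ · R_d(t) · Ω_d(t). -/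
open Matrix

/-- The vee map, inverse to `hat` on skew-symmetric matrices. -/
def vee (S : Matrix (Fin 3) (Fin 3) ℝ) : Fin 3 → ℝ :=
  ![S 2 1, S 0 2, S 1 0]

/-- The rotation error vector. -/
noncomputable def eR (R Rd : ℝ → Matrix (Fin 3) (Fin 3) ℝ) (t : ℝ) : Fin 3 → ℝ :=
  (1 / (2 * Real.sqrt (1 + ((Rd t)ᵀ * R t).trace))) •
    vee ((Rd t)ᵀ * R t - (R t)ᵀ * Rd t)

/-- The angular velocity error vector. -/
def eΩ (R Rd : ℝ → Matrix (Fin 3) (Fin 3) ℝ) (Ω Ωd : ℝ → Fin 3 → ℝ) (t : ℝ) : Fin 3 → ℝ :=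
  Ω t - ((R t)ᵀ * Rd t) *ᵥ Ωd t

lemma key_adj (M : Matrix (Fin 3) (Fin 3) ℝ) (v : Fin 3 → ℝ) :
    Mᵀ * hat (M *ᵥ v) * M = M.det • hat v := by
  ext i j
  fin_cases i <;> fin_cases j <;>
    simp [Matrix.mul_apply, Matrix.mulVec, Matrix.det_fin_three, hat, dotProduct,
      Fin.sum_univ_three] <;> ring

lemma hat_vee_sub (Q : Matrix (Fin 3) (Fin 3) ℝ) : hat (vee (Q - Qᵀ)) = Q - Qᵀ := by
  ext i j
  fin_cases i <;> fin_cases j <;> simp [hat, vee] <;> ring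

lemma vee_hat (x : Fin 3 → ℝ) : vee (hat x) = x := by
  funext i; fin_cases i <;> rfl

lemma fixed_axis (Q : Matrix (Fin 3) (Fin 3) ℝ) (hQ : Qᵀ * Q = 1) (hdet : Q.det = 1) :
    Q *ᵥ vee (Q - Qᵀ) = vee (Q - Qᵀ) := by
  have hQQ : Q * Qᵀ = 1 := by rwa [mul_eq_one_comm] at hQ
  have h1 : Qᵀ * hat (Q *ᵥ vee (Q - Qᵀ)) * Q = hat (vee (Q - Qᵀ)) := by
    rw [key_adj, hdet, one_smul]
  have h2 : hat (Q *ᵥ vee (Q - Qᵀ)) = Q * hat (vee (Q - Qᵀ)) * Qᵀ := by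
    calc hat (Q *ᵥ vee (Q - Qᵀ)) = Q * (Qᵀ * hat (Q *ᵥ vee (Q - Qᵀ)) * Q) * Qᵀ := by
          simp only [Matrix.mul_assoc, hQQ]
          rw [← Matrix.mul_assoc Q Qᵀ, hQQ, Matrix.one_mul, Matrix.mul_one]
      _ = Q * hat (vee (Q - Qᵀ)) * Qᵀ := by rw [h1, Matrix.mul_assoc]
  have h3 : Q * (Q - Qᵀ) * Qᵀ = Q - Qᵀ := by
    rw [Matrix.mul_sub, Matrix.sub_mul, Matrix.mul_assoc, Matrix.mul_assoc, hQQ,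
      Matrix.mul_one]
    rw [← Matrix.mul_assoc Q Qᵀ Qᵀ, hQQ, Matrix.one_mul]
  have h4 := h2.trans (by rw [hat_vee_sub, h3, ← hat_vee_sub])
  have h5 := congrArg vee h4
  rwa [vee_hat, vee_hat] at h5

lemma D_expand (A B : Matrix (Fin 3) (Fin 3) ℝ) (a b : Fin 3 → ℝ) :
    (∑ i, ∑ j, ((B * hat b) j i * A j i + B j i * (A * hat a) j i)) =
      (∑ i, vee (Bᵀ * A - (Bᵀ * A)ᵀ) i * b i) -
        (∑ i, vee (Bᵀ * A - (Bᵀ * A)ᵀ) i * a i) := by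
  simp [Matrix.mul_apply, hat, vee, Fin.sum_univ_three]
  ring

/-- The attitude error function `ψ(t) = 2 - √(1 + tr (R_d(t)ᵀ R(t)))` is differentiable
with derivative `⟨e_R(t), e_Ω(t)⟩`. -/
theorem hasDerivAt_attitude_error
    (R Rd : ℝ → Matrix (Fin 3) (Fin 3) ℝ) (Ω Ωd : ℝ → Fin 3 → ℝ)
    (hSO : ∀ t, (R t)ᵀ * R t = 1 ∧ (R t).det = 1)
    (hSOd : ∀ t, (Rd t)ᵀ * Rd t = 1 ∧ (Rd t).det = 1)
    (hΩcont : Continuous Ω) (hΩdcont : Continuous Ωd)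
    (hR : ∀ t i j, HasDerivAt (fun s => R s i j) ((R t * hat (Ω t)) i j) t)
    (hRd : ∀ t i j, HasDerivAt (fun s => Rd s i j) ((Rd t * hat (Ωd t)) i j) t)
    (htr : ∀ t, -1 < ((Rd t)ᵀ * R t).trace) (t : ℝ) :
    HasDerivAt (fun s => 2 - Real.sqrt (1 + ((Rd s)ᵀ * R s).trace))
      (∑ i, eR R Rd t i * eΩ R Rd Ω Ωd t i) t := by
  obtain ⟨hRo, hRdet⟩ := hSO t
  obtain ⟨hRdo, hRddet⟩ := hSOd t
  set Q : Matrix (Fin 3) (Fin 3) ℝ := (Rd t)ᵀ * R t with hQdef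
  have hQt : (R t)ᵀ * Rd t = Qᵀ := by
    rw [hQdef, Matrix.transpose_mul, Matrix.transpose_transpose]
  have hQo : Qᵀ * Q = 1 := by
    rw [hQdef, Matrix.transpose_mul, Matrix.transpose_transpose, Matrix.mul_assoc,
      ← Matrix.mul_assoc (Rd t), mul_eq_one_comm.mp hRdo, Matrix.one_mul, hRo]
  have hQdet : Q.det = 1 := by
    rw [hQdef, Matrix.det_mul, Matrix.det_transpose, hRdet, hRddet, one_mul]
  have hfix := fixed_axis Q hQo hQdet
  set D : ℝ := ∑ i, ∑ j, ((Rd t * hat (Ωd t)) j i * R t j i +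
      Rd t j i * (R t * hat (Ω t)) j i) with hDdef
  have hf : HasDerivAt (fun s => ((Rd s)ᵀ * R s).trace) D t := by
    have htreq : ∀ s : ℝ, ((Rd s)ᵀ * R s).trace = ∑ i, ∑ j, Rd s j i * R s j i := by
      intro s
      simp [Matrix.trace, Matrix.diag, Matrix.mul_apply]
    simp only [htreq, hDdef]
    exact HasDerivAt.fun_sum fun i _ => HasDerivAt.fun_sum fun j _ => (hRd t j i).mul (hR t j i)
  have hpos : (0 : ℝ) < 1 + Q.trace := by linarith [htr t]
  have hne : (1 : ℝ) + Q.trace ≠ 0 := ne_of_gt hpos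
  have hsne : Real.sqrt (1 + Q.trace) ≠ 0 := by
    positivity
  have hsq : HasDerivAt (fun s => Real.sqrt (1 + ((Rd s)ᵀ * R s).trace))
      ((0 + D) / (2 * Real.sqrt (1 + Q.trace))) t :=
    HasDerivAt.sqrt ((hasDerivAt_const t (1 : ℝ)).add hf) hne
  have hψ := (hasDerivAt_const t (2 : ℝ)).sub hsq
  have hgoal : ∑ i, eR R Rd t i * eΩ R Rd Ω Ωd t i
      = 0 - (0 + D) / (2 * Real.sqrt (1 + Q.trace)) := by
    have hD : D = (∑ i, vee (Q - Qᵀ) i * Ωd t i) - (∑ i, vee (Q - Qᵀ) i * Ω t i) := by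
      rw [hDdef]
      exact D_expand (R t) (Rd t) (Ω t) (Ωd t)
    have hdot : ∑ i, vee (Q - Qᵀ) i * (Qᵀ *ᵥ Ωd t) i = ∑ i, vee (Q - Qᵀ) i * Ωd t i := by
      have h := Matrix.dotProduct_mulVec (vee (Q - Qᵀ)) Qᵀ (Ωd t)
      rw [Matrix.vecMul_transpose, hfix] at h
      simpa [dotProduct] using h
    have expand : ∑ i, eR R Rd t i * eΩ R Rd Ω Ωd t i
        = (1 / (2 * Real.sqrt (1 + Q.trace))) *
          ((∑ i, vee (Q - Qᵀ) i * Ω t i) - ∑ i, vee (Q - Qᵀ) i * (Qᵀ *ᵥ Ωd t) i) := by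
      simp only [eR, eΩ, hQt, ← hQdef, Pi.smul_apply, smul_eq_mul, Pi.sub_apply,
        Fin.sum_univ_three]
      ring
    rw [expand, hdot, hD]
    field_simp
    ring
  rw [hgoal]
  exact hψ
end
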